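/- Modified FDR control for FSTP0: under the stated assumptions on the p-values, fix c ∈ (0,1), q ∈ (0,1] and K ⊆ {1,…,m}, and let k̂₀ = max{ k ∈ K : #{j ≤ k : p_j > c} / max(k, 1) ≤ (1−c)·q } (with k̂₀ = 0 if this set is empty). Rejecting H_j for all j ≤ k̂₀, let V = #{null j ≤ k̂₀} and R = k̂₀. Then E[ V / (R + q⁻¹/(1−c)) ] ≤ q. -/

import Mathlib

open MeasureTheory ProbabilityTheory

/-- `#{j ≤ k : p_j > c}`, where the p-values are indexed by `j ∈ {1,…,m}`. -/
noncomputable def seqCountAbove (pv : ℕ → ℝ) (c : ℝ) (k : ℕ) : ℕ :=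
  ((Finset.Icc 1 k).filter fun j => c < pv j).card

/-- `#{j ≤ k : p_j ≤ c}`. -/
noncomputable def seqCountBelow (pv : ℕ → ℝ) (c : ℝ) (k : ℕ) : ℕ :=
  ((Finset.Icc 1 k).filter fun j => pv j ≤ c).card

/-- The FSTP0 stopping index
`k̂₀ = max{ k ∈ K : #{j ≤ k : p_j > c} / max(k, 1) ≤ (1−c)·q }`, set to `0` if
this set is empty. -/
noncomputable def fstp0Stop (c q : ℝ) (K : Finset ℕ) (pv : ℕ → ℝ) : ℕ :=
  let cand := K.filter fun k => ((seqCountAbove pv c k : ℝ)) / max (k : ℝ) 1 ≤ (1 - c) * q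
  if h : cand.Nonempty then cand.max' h else 0

namespace FSTP0Aux
noncomputable def pvOf (S : Finset ℕ) : ℕ → ℝ := fun j => if j ∈ S then 0 else 1
noncomputable def stopOf (c q : ℝ) (K S : Finset ℕ) : ℕ := fstp0Stop c q K (pvOf S)
def cntB (N S : Finset ℕ) (k : ℕ) : ℕ := (N.filter fun j => j ≤ k ∧ j ∈ S).card
def cntA (N S : Finset ℕ) (k : ℕ) : ℕ := (N.filter fun j => j ≤ k ∧ j ∉ S).card
noncomputable def mart (N S : Finset ℕ) (k : ℕ) : ℝ :=
  (cntB N S k : ℝ) / (1 + (cntA N S k : ℝ))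
noncomputable def Gt (c q : ℝ) (K N : Finset ℕ) (t : ℕ) (S : Finset ℕ) : ℝ :=
  mart N S (max t (stopOf c q K S))
noncomputable def wgt (r : ℝ) (A U : Finset ℕ) : ℝ :=
  r ^ U.card * (1 - r) ^ (A \ U).card

lemma mart_nonneg (N S : Finset ℕ) (k : ℕ) : 0 ≤ mart N S k := by
  apply div_nonneg (Nat.cast_nonneg _); positivity

lemma seqCountAbove_pvOf {c : ℝ} (hc0 : 0 < c) (hc1 : c < 1) (S : Finset ℕ) (k : ℕ) :
    seqCountAbove (pvOf S) c k = ((Finset.Icc 1 k).filter fun j => j ∉ S).card := by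
  unfold seqCountAbove pvOf
  congr 1
  apply Finset.filter_congr
  intro j _
  by_cases h : j ∈ S <;> simp [h, hc1, not_lt.2 hc0.le]

lemma stop_le_iff (c q : ℝ) (K S : Finset ℕ) (t : ℕ) :
    stopOf c q K S ≤ t ↔
      ∀ k ∈ K, ((seqCountAbove (pvOf S) c k : ℝ)) / max (k : ℝ) 1 ≤ (1 - c) * q → k ≤ t := by
  unfold stopOf fstp0Stop
  set cand := K.filter fun k =>
    ((seqCountAbove (pvOf S) c k : ℝ)) / max (k : ℝ) 1 ≤ (1 - c) * q with hcand
  by_cases h : cand.Nonempty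
  · simp only [dif_pos h]
    constructor
    · intro hle k hk hcond
      exact le_trans (Finset.le_max' cand k (by simp [hcand, Finset.mem_filter, hk, hcond])) hle
    · intro hall
      rcases Finset.mem_filter.1 (cand.max'_mem h) with ⟨hk, hcond⟩
      exact hall _ hk hcond
  · simp only [dif_neg h]
    constructor
    · intro _ k hk hcond
      exact absurd ⟨k, by simp [hcand, Finset.mem_filter, hk, hcond]⟩ h
    · intro _; exact Nat.zero_le _

lemma stop_spec (c q : ℝ) (K S : Finset ℕ) (h : stopOf c q K S ≠ 0) :
    stopOf c q K S ∈ K ∧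
      ((seqCountAbove (pvOf S) c (stopOf c q K S) : ℝ)) / max (stopOf c q K S : ℝ) 1
        ≤ (1 - c) * q := by
  unfold stopOf fstp0Stop at *
  set cand := K.filter fun k =>
    ((seqCountAbove (pvOf S) c k : ℝ)) / max (k : ℝ) 1 ≤ (1 - c) * q with hcand
  by_cases hne : cand.Nonempty
  · simp only [dif_pos hne] at *
    exact Finset.mem_filter.1 (cand.max'_mem hne)
  · simp only [dif_neg hne] at h
    exact absurd rfl h

lemma stop_le (c q : ℝ) {m : ℕ} {K : Finset ℕ} (hK : K ⊆ Finset.Icc 1 m) (S : Finset ℕ) :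
    stopOf c q K S ≤ m := by
  rw [stop_le_iff]
  intro k hk _
  exact (Finset.mem_Icc.1 (hK hk)).2

lemma stop_eq {c q : ℝ} (hc0 : 0 < c) (hc1 : c < 1) {m : ℕ} {K : Finset ℕ}
    (hK : K ⊆ Finset.Icc 1 m) (p : ℕ → ℝ) :
    fstp0Stop c q K p = stopOf c q K ((Finset.Icc 1 m).filter fun j => p j ≤ c) := by
  set S₀ := (Finset.Icc 1 m).filter fun j => p j ≤ c with hS₀
  have hcount : ∀ k ∈ K, seqCountAbove p c k = seqCountAbove (pvOf S₀) c k := by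
    intro k hk
    rw [seqCountAbove_pvOf hc0 hc1]
    unfold seqCountAbove
    congr 1
    apply Finset.filter_congr
    intro j hj
    have hjm : j ∈ Finset.Icc 1 m := by
      rw [Finset.mem_Icc] at *
      exact ⟨hj.1, hj.2.trans (Finset.mem_Icc.1 (hK hk)).2⟩
    rw [hS₀]
    simp only [Finset.mem_filter, hjm, true_and, not_le]
  have hfilt : (K.filter fun k => ((seqCountAbove p c k : ℝ)) / max (k : ℝ) 1 ≤ (1 - c) * q)
      = K.filter fun k => ((seqCountAbove (pvOf S₀) c k : ℝ)) / max (k : ℝ) 1 ≤ (1 - c) * q := by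
    apply Finset.filter_congr
    intro k hk
    rw [hcount k hk]
  unfold stopOf fstp0Stop
  simp only [hfilt]

lemma Gt_zero (c q : ℝ) (K N S : Finset ℕ) :
    Gt c q K N 0 S = mart N S (stopOf c q K S) := by
  unfold Gt
  rw [Nat.max_comm, Nat.max_zero]

lemma cnt_split (N S : Finset ℕ) (k : ℕ) :
    (N.filter fun j => j ≤ k).card = cntB N S k + cntA N S k := by
  unfold cntB cntA
  rw [← Finset.filter_filter, ← Finset.filter_filter]
  exact (Finset.card_filter_add_card_filter_not (fun j => j ∈ S)).symm

/-- the deterministic pointwise bound. -/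
lemma pointwise {c q : ℝ} (hc0 : 0 < c) (hc1 : c < 1) (hq0 : 0 < q)
    {K N : Finset ℕ} (hN1 : ∀ j ∈ N, 1 ≤ j) (S : Finset ℕ) :
    ((N.filter fun j => j ≤ stopOf c q K S).card : ℝ) /
        ((stopOf c q K S : ℝ) + q⁻¹ / (1 - c))
      ≤ (1 - c) * q * (1 + Gt c q K N 0 S) := by
  have h1c : (0:ℝ) < 1 - c := by linarith
  set R := stopOf c q K S with hR
  set A : ℝ := q⁻¹ / (1 - c) with hA
  have hApos : 0 < A := by positivity
  have hAone : (1 - c) * q * A = 1 := by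
    rw [hA]; field_simp; try ring
  rw [Gt_zero]
  have hmart := mart_nonneg N S R
  by_cases hR0 : R = 0
  · have : (N.filter fun j => j ≤ R).card = 0 := by
      rw [Finset.card_eq_zero]
      apply Finset.filter_false_of_mem
      intro j hj
      have := hN1 j hj
      omega
    rw [this]
    simp only [Nat.cast_zero, zero_div]
    positivity
  · -- R ≥ 1 case
    obtain ⟨hRK, hcond⟩ := stop_spec c q K S hR0
    have hR1 : 1 ≤ R := Nat.one_le_iff_ne_zero.2 hR0
    have hRr : (1:ℝ) ≤ (R:ℝ) := by exact_mod_cast hR1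
    have hmax : max (R:ℝ) 1 = (R:ℝ) := max_eq_left hRr
    rw [hmax] at hcond
    have habove : (seqCountAbove (pvOf S) c R : ℝ) ≤ (1 - c) * q * R := by
      rw [div_le_iff₀ (by linarith : (0:ℝ) < (R:ℝ))] at hcond
      linarith [hcond]
    have hVpA : (cntA N S R : ℝ) ≤ (1 - c) * q * R := by
      refine le_trans ?_ habove
      have hsub : (N.filter fun j => j ≤ R ∧ j ∉ S) ⊆
          ((Finset.Icc 1 R).filter fun j => j ∉ S) := by
        intro j hj
        rw [Finset.mem_filter] at *
        exact ⟨Finset.mem_Icc.2 ⟨hN1 j hj.1, hj.2.1⟩, hj.2.2⟩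
      rw [seqCountAbove_pvOf hc0 hc1]
      exact_mod_cast Finset.card_le_card hsub
    rw [cnt_split N S R]
    set x := (cntB N S R : ℝ) with hx
    set y := (cntA N S R : ℝ) with hy
    have hx0 : 0 ≤ x := Nat.cast_nonneg _
    have hy0 : 0 ≤ y := Nat.cast_nonneg _
    have h1y : (0:ℝ) < 1 + y := by linarith
    have hkey : 1 + y ≤ (1 - c) * q * ((R:ℝ) + A) := by
      have : (1 - c) * q * ((R:ℝ) + A) = (1 - c) * q * R + (1 - c) * q * A := by ring
      rw [this, hAone]
      linarith
    have hRA : (0:ℝ) < (R:ℝ) + A := by positivity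
    unfold mart
    rw [← hx, ← hy]
    push_cast
    rw [div_le_iff₀ hRA]
    have h2 : (1 + x / (1 + y)) * (1 + y) = x + y + 1 := by
      field_simp
      ring
    have hnn : (0:ℝ) ≤ 1 + x / (1 + y) := by positivity
    calc x + y ≤ (1 + x / (1 + y)) * (1 + y) := by rw [h2]; linarith
      _ ≤ (1 + x / (1 + y)) * ((1 - c) * q * ((R:ℝ) + A)) :=
          mul_le_mul_of_nonneg_left hkey hnn
      _ = (1 - c) * q * (1 + x / (1 + y)) * ((R:ℝ) + A) := by ring

lemma wgt_nonneg {r : ℝ} (hr0 : 0 ≤ r) (hr1 : r ≤ 1) (A U : Finset ℕ) : 0 ≤ wgt r A U := by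
  unfold wgt
  have h : 0 ≤ 1 - r := by linarith
  positivity

lemma wgt_union {r : ℝ} {A B U V : Finset ℕ} (hd : Disjoint A B) (hU : U ⊆ A) (hV : V ⊆ B) :
    wgt r (A ∪ B) (U ∪ V) = wgt r A U * wgt r B V := by
  unfold wgt
  have hdUV : Disjoint U V := hd.mono hU hV
  have hcard : (U ∪ V).card = U.card + V.card := Finset.card_union_of_disjoint hdUV
  have hsd : (A ∪ B) \ (U ∪ V) = (A \ U) ∪ (B \ V) := by
    ext j
    simp only [Finset.mem_sdiff, Finset.mem_union, not_or]
    constructor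
    · rintro ⟨hA | hB, hnU, hnV⟩
      · exact Or.inl ⟨hA, hnU⟩
      · exact Or.inr ⟨hB, hnV⟩
    · rintro (⟨hA, hnU⟩ | ⟨hB, hnV⟩)
      · exact ⟨Or.inl hA, hnU, fun hv => Finset.disjoint_left.1 hd hA (hV hv)⟩
      · exact ⟨Or.inr hB, fun hu => Finset.disjoint_left.1 hd (hU hu) hB, hnV⟩
  have hcsd : ((A \ U) ∪ (B \ V)).card = (A \ U).card + (B \ V).card :=
    Finset.card_union_of_disjoint (hd.mono (Finset.sdiff_subset) (Finset.sdiff_subset))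
  rw [hcard, hsd, hcsd, pow_add, pow_add]
  ring

lemma sum_powerset_union {A B : Finset ℕ} (h : Disjoint A B) (f : Finset ℕ → ℝ) :
    ∑ U ∈ (A ∪ B).powerset, f U = ∑ V ∈ A.powerset, ∑ T ∈ B.powerset, f (V ∪ T) := by
  rw [← Finset.sum_product']
  refine Finset.sum_nbij' (i := fun U => (U ∩ A, U ∩ B)) (j := fun P => P.1 ∪ P.2)
    ?_ ?_ ?_ ?_ ?_
  · intro U hU
    simp only [Finset.mem_product, Finset.mem_powerset]
    exact ⟨Finset.inter_subset_right, Finset.inter_subset_right⟩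
  · intro P hP
    rw [Finset.mem_product, Finset.mem_powerset, Finset.mem_powerset] at hP
    exact Finset.mem_powerset.2 (Finset.union_subset_union hP.1 hP.2)
  · intro U hU
    rw [Finset.mem_powerset] at hU
    simp only
    rw [← Finset.inter_union_distrib_left]
    exact Finset.inter_eq_left.2 hU
  · intro P hP
    rw [Finset.mem_product, Finset.mem_powerset, Finset.mem_powerset] at hP
    have h1 : ((P.1 ∪ P.2) ∩ A : Finset ℕ) = P.1 := by
      rw [Finset.union_inter_distrib_right, Finset.inter_eq_left.2 hP.1,
        Finset.disjoint_iff_inter_eq_empty.1 (Finset.disjoint_of_subset_left hP.2 h.symm), Finset.union_empty]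
    have h2 : ((P.1 ∪ P.2) ∩ B : Finset ℕ) = P.2 := by
      rw [Finset.union_inter_distrib_right, Finset.inter_eq_left.2 hP.2,
        Finset.disjoint_iff_inter_eq_empty.1 (Finset.disjoint_of_subset_left hP.1 h), Finset.empty_union]
    rw [h1, h2]
  · intro U hU
    rw [Finset.mem_powerset] at hU
    simp only
    rw [← Finset.inter_union_distrib_left, Finset.inter_eq_left.2 hU]

lemma mem_S_iff {N W U₁ U₂ : Finset ℕ} {t : ℕ} (hW : Disjoint N W)
    (hU₁ : U₁ ⊆ N.filter (fun j => j ≤ t+1)) (hU₂ : U₂ ⊆ N \ N.filter (fun j => j ≤ t+1))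
    {j : ℕ} (hjN : j ∈ N) (hjt : j ≤ t+1) : (j ∈ U₁ ∪ (U₂ ∪ W)) ↔ j ∈ U₁ := by
  constructor
  · intro hj
    rcases Finset.mem_union.1 hj with h1 | h2
    · exact h1
    rcases Finset.mem_union.1 h2 with h3 | h4
    · have hjJ : j ∈ N.filter (fun j => j ≤ t+1) := by
        rw [Finset.mem_filter]; exact ⟨hjN, hjt⟩
      exact absurd hjJ (Finset.mem_sdiff.1 (hU₂ h3)).2
    · exact absurd h4 (Finset.disjoint_left.1 hW hjN)
  · exact fun h => Finset.mem_union_left _ h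

lemma memJ {N U₁ : Finset ℕ} {t : ℕ} (hU₁ : U₁ ⊆ N.filter (fun j => j ≤ t+1))
    {j : ℕ} (hj : j ∈ U₁) : j ∈ N ∧ j ≤ t + 1 := by
  have := hU₁ hj
  rw [Finset.mem_filter] at this
  exact this

lemma filtB_succ {N W U₁ U₂ : Finset ℕ} {t : ℕ} (hW : Disjoint N W)
    (hU₁ : U₁ ⊆ N.filter (fun j => j ≤ t+1)) (hU₂ : U₂ ⊆ N \ N.filter (fun j => j ≤ t+1)) :
    N.filter (fun j => j ≤ t+1 ∧ j ∈ U₁ ∪ (U₂ ∪ W)) = U₁ := by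
  ext j
  rw [Finset.mem_filter]
  constructor
  · rintro ⟨hjN, hjt, hjS⟩
    exact (mem_S_iff hW hU₁ hU₂ hjN hjt).1 hjS
  · intro hj
    obtain ⟨h1, h2⟩ := memJ hU₁ hj
    exact ⟨h1, h2, Finset.mem_union_left _ hj⟩

lemma filtA_succ {N W U₁ U₂ : Finset ℕ} {t : ℕ} (hW : Disjoint N W)
    (hU₁ : U₁ ⊆ N.filter (fun j => j ≤ t+1)) (hU₂ : U₂ ⊆ N \ N.filter (fun j => j ≤ t+1)) :
    N.filter (fun j => j ≤ t+1 ∧ j ∉ U₁ ∪ (U₂ ∪ W)) = (N.filter (fun j => j ≤ t+1)) \ U₁ := by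
  ext j
  rw [Finset.mem_filter, Finset.mem_sdiff, Finset.mem_filter]
  constructor
  · rintro ⟨hjN, hjt, hjS⟩
    exact ⟨⟨hjN, hjt⟩, fun hU => hjS (Finset.mem_union_left _ hU)⟩
  · rintro ⟨⟨hjN, hjt⟩, hjU⟩
    exact ⟨hjN, hjt, fun hjS => hjU ((mem_S_iff hW hU₁ hU₂ hjN hjt).1 hjS)⟩

lemma filtB_pred {N W U₁ U₂ : Finset ℕ} {t : ℕ} (hW : Disjoint N W)
    (hU₁ : U₁ ⊆ N.filter (fun j => j ≤ t+1)) (hU₂ : U₂ ⊆ N \ N.filter (fun j => j ≤ t+1)) :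
    N.filter (fun j => j ≤ t ∧ j ∈ U₁ ∪ (U₂ ∪ W)) = U₁.erase (t+1) := by
  ext j
  rw [Finset.mem_filter, Finset.mem_erase]
  constructor
  · rintro ⟨hjN, hjt, hjS⟩
    exact ⟨by omega, (mem_S_iff hW hU₁ hU₂ hjN (by omega)).1 hjS⟩
  · rintro ⟨hne, hj⟩
    obtain ⟨h1, h2⟩ := memJ hU₁ hj
    exact ⟨h1, by omega, Finset.mem_union_left _ hj⟩

lemma filtA_pred {N W U₁ U₂ : Finset ℕ} {t : ℕ} (hW : Disjoint N W)
    (hU₁ : U₁ ⊆ N.filter (fun j => j ≤ t+1)) (hU₂ : U₂ ⊆ N \ N.filter (fun j => j ≤ t+1)) :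
    N.filter (fun j => j ≤ t ∧ j ∉ U₁ ∪ (U₂ ∪ W))
      = ((N.filter (fun j => j ≤ t+1)) \ U₁).erase (t+1) := by
  ext j
  rw [Finset.mem_filter, Finset.mem_erase, Finset.mem_sdiff, Finset.mem_filter]
  constructor
  · rintro ⟨hjN, hjt, hjS⟩
    exact ⟨by omega, ⟨hjN, by omega⟩, fun hU => hjS (Finset.mem_union_left _ hU)⟩
  · rintro ⟨hne, ⟨hjN, hjt⟩, hjU⟩
    exact ⟨hjN, by omega, fun hjS => hjU ((mem_S_iff hW hU₁ hU₂ hjN hjt).1 hjS)⟩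

lemma count_notmem_congr {k : ℕ} {U₁ U₁' Y : Finset ℕ} (h1 : U₁ ⊆ Finset.Icc 1 k)
    (h1' : U₁' ⊆ Finset.Icc 1 k) (hcard : U₁.card = U₁'.card)
    (hd : Disjoint U₁ Y) (hd' : Disjoint U₁' Y) :
    ((Finset.Icc 1 k).filter (fun j => j ∉ U₁ ∪ Y)).card
      = ((Finset.Icc 1 k).filter (fun j => j ∉ U₁' ∪ Y)).card := by
  have key : ∀ (U : Finset ℕ), U ⊆ Finset.Icc 1 k → Disjoint U Y →
      ((Finset.Icc 1 k).filter (fun j => j ∉ U ∪ Y)).card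
        = (Finset.Icc 1 k).card - (U.card + ((Finset.Icc 1 k) ∩ Y).card) := by
    intro U hU hdU
    rw [← Finset.sdiff_eq_filter]
    have h := Finset.card_sdiff_add_card_inter (Finset.Icc 1 k) (U ∪ Y)
    have hint : (Finset.Icc 1 k) ∩ (U ∪ Y) = U ∪ ((Finset.Icc 1 k) ∩ Y) := by
      rw [Finset.inter_union_distrib_left, Finset.inter_eq_right.2 hU]
    have hcu : ((Finset.Icc 1 k) ∩ (U ∪ Y)).card = U.card + ((Finset.Icc 1 k) ∩ Y).card := by
      rw [hint]
      exact Finset.card_union_of_disjoint (hdU.mono_right Finset.inter_subset_right)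
    omega
  rw [key U₁ h1 hd, key U₁' h1' hd', hcard]

lemma stop_le_congr {c q : ℝ} (hc0 : 0 < c) (hc1 : c < 1) {K : Finset ℕ} {t : ℕ}
    {U₁ U₁' Y : Finset ℕ} (h1 : U₁ ⊆ Finset.Icc 1 (t+1)) (h1' : U₁' ⊆ Finset.Icc 1 (t+1))
    (hcard : U₁.card = U₁'.card) (hd : Disjoint U₁ Y) (hd' : Disjoint U₁' Y) :
    (stopOf c q K (U₁ ∪ Y) ≤ t ↔ stopOf c q K (U₁' ∪ Y) ≤ t) := by
  have hcount : ∀ k, t+1 ≤ k →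
      seqCountAbove (pvOf (U₁ ∪ Y)) c k = seqCountAbove (pvOf (U₁' ∪ Y)) c k := by
    intro k hk
    rw [seqCountAbove_pvOf hc0 hc1, seqCountAbove_pvOf hc0 hc1]
    exact count_notmem_congr (h1.trans (Finset.Icc_subset_Icc_right hk))
      (h1'.trans (Finset.Icc_subset_Icc_right hk)) hcard hd hd'
  rw [stop_le_iff, stop_le_iff]
  constructor <;> intro h k hk hcond
  · by_cases hkt : k ≤ t
    · exact hkt
    · exact h k hk (by rwa [hcount k (by omega)])
  · by_cases hkt : k ≤ t
    · exact hkt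
    · exact h k hk (by rwa [← hcount k (by omega)])

lemma final_arith {c₁ c₂ x aa : ℝ} (hc₁ : 0 ≤ c₁) (hc₂ : 0 ≤ c₂) (hx : 0 ≤ x)
    (ha : 1 ≤ aa) (hkey : c₂ * (x+1) = c₁ * aa) :
    c₁ * (x/(1+aa)) + c₂ * ((x+1)/(1+(aa-1))) ≤ (c₁ + c₂) * ((x+1)/(1+aa)) := by
  have h1 : (0:ℝ) < aa := by linarith
  have h2 : (0:ℝ) < 1 + aa := by linarith
  rw [show (1:ℝ) + (aa - 1) = aa by ring]
  have e1 : c₁ * (x/(1+aa)) + c₂ * ((x+1)/aa)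
      = (c₁*x*aa + c₂*(x+1)*(1+aa)) / ((1+aa)*aa) := by field_simp; try ring
  have e2 : (c₁ + c₂) * ((x+1)/(1+aa)) = ((c₁+c₂)*(x+1)*aa) / ((1+aa)*aa) := by
    field_simp; try ring
  rw [e1, e2]
  apply (div_le_div_iff_of_pos_right (by positivity : (0:ℝ) < (1+aa)*aa)).2
  nlinarith [hkey]

lemma class_ineq {N W U₂ : Finset ℕ} {t : ℕ} (hW : Disjoint N W) (ht1 : t+1 ∈ N)
    (hU₂ : U₂ ⊆ N \ N.filter (fun j => j ≤ t+1)) (s : ℕ) :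
    ∑ U₁ ∈ (N.filter (fun j => j ≤ t+1)).powersetCard s, mart N (U₁ ∪ (U₂ ∪ W)) t
      ≤ ∑ U₁ ∈ (N.filter (fun j => j ≤ t+1)).powersetCard s, mart N (U₁ ∪ (U₂ ∪ W)) (t+1) := by
  classical
  set J := N.filter (fun j => j ≤ t+1) with hJdef
  have huJ : t+1 ∈ J := by rw [hJdef, Finset.mem_filter]; exact ⟨ht1, le_refl _⟩
  set nJ := J.card with hnJdef
  have hnJ1 : 1 ≤ nJ := Finset.card_pos.2 ⟨t+1, huJ⟩
  rcases Nat.eq_zero_or_pos s with hs0 | hspos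
  · subst hs0
    rw [Finset.powersetCard_zero, Finset.sum_singleton, Finset.sum_singleton]
    have hsub : (∅ : Finset ℕ) ⊆ J := Finset.empty_subset _
    have h1 : cntB N (∅ ∪ (U₂ ∪ W)) t = 0 := by
      unfold cntB; rw [filtB_pred hW hsub hU₂]; simp
    have h2 : cntB N (∅ ∪ (U₂ ∪ W)) (t+1) = 0 := by
      unfold cntB; rw [filtB_succ hW hsub hU₂]; simp
    unfold mart
    rw [h1, h2]
    simp
  · have hval1 : ∀ U₁ ∈ J.powersetCard s, mart N (U₁ ∪ (U₂ ∪ W)) (t+1)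
        = (s:ℝ)/(1 + ((nJ - s : ℕ):ℝ)) := by
      intro U₁ hm
      obtain ⟨hsub, hcard⟩ := Finset.mem_powersetCard.1 hm
      unfold mart cntB cntA
      rw [filtB_succ hW hsub hU₂, filtA_succ hW hsub hU₂, Finset.card_sdiff_of_subset hsub, hcard]
    have hvalmem : ∀ U₁ ∈ (J.powersetCard s).filter (fun U₁ => t+1 ∈ U₁),
        mart N (U₁ ∪ (U₂ ∪ W)) t = ((s-1 : ℕ):ℝ)/(1 + ((nJ - s : ℕ):ℝ)) := by
      intro U₁ hm
      rw [Finset.mem_filter] at hm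
      obtain ⟨hsub, hcard⟩ := Finset.mem_powersetCard.1 hm.1
      unfold mart cntB cntA
      rw [filtB_pred hW hsub hU₂, filtA_pred hW hsub hU₂]
      rw [Finset.card_erase_of_mem hm.2]
      have hnm : t+1 ∉ J \ U₁ := fun hc => (Finset.mem_sdiff.1 hc).2 hm.2
      rw [Finset.erase_eq_of_notMem hnm, Finset.card_sdiff_of_subset hsub, hcard]
    have hvalnot : ∀ U₁ ∈ (J.powersetCard s).filter (fun U₁ => ¬ t+1 ∈ U₁),
        mart N (U₁ ∪ (U₂ ∪ W)) t = (s:ℝ)/(1 + ((nJ - s - 1 : ℕ):ℝ)) := by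
      intro U₁ hm
      rw [Finset.mem_filter] at hm
      obtain ⟨hsub, hcard⟩ := Finset.mem_powersetCard.1 hm.1
      unfold mart cntB cntA
      rw [filtB_pred hW hsub hU₂, filtA_pred hW hsub hU₂]
      rw [Finset.erase_eq_of_notMem hm.2]
      have hmem : t+1 ∈ J \ U₁ := Finset.mem_sdiff.2 ⟨huJ, hm.2⟩
      rw [Finset.card_erase_of_mem hmem, Finset.card_sdiff_of_subset hsub, hcard]
    set c₁ := ((J.powersetCard s).filter (fun U₁ => t+1 ∈ U₁)).card with hc₁def
    set c₂ := ((J.powersetCard s).filter (fun U₁ => ¬ t+1 ∈ U₁)).card with hc₂def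
    have hc₂eq : c₂ = (nJ - 1).choose s := by
      have hset : (J.powersetCard s).filter (fun U₁ => ¬ t+1 ∈ U₁)
          = (J.erase (t+1)).powersetCard s := by
        ext U₁
        simp only [Finset.mem_filter, Finset.mem_powersetCard, Finset.subset_erase]
        tauto
      rw [hc₂def, hset, Finset.card_powersetCard, Finset.card_erase_of_mem huJ]
    obtain ⟨s', rfl⟩ : ∃ s', s = s' + 1 := ⟨s - 1, by omega⟩
    have hc₁eq : c₁ = (nJ - 1).choose s' := by
      have hbij : ((J.powersetCard (s'+1)).filter (fun U₁ => t+1 ∈ U₁)).card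
          = ((J.erase (t+1)).powersetCard s').card := by
        apply Finset.card_nbij' (i := fun U => U.erase (t+1)) (j := fun V => insert (t+1) V)
        · intro U hU
          rw [Finset.mem_coe, Finset.mem_filter] at hU
          obtain ⟨hsub, hcard⟩ := Finset.mem_powersetCard.1 hU.1
          rw [Finset.mem_coe, Finset.mem_powersetCard]
          refine ⟨Finset.erase_subset_erase _ hsub, ?_⟩
          rw [Finset.card_erase_of_mem hU.2, hcard]
          omega
        · intro V hV
          obtain ⟨hsub, hcard⟩ := Finset.mem_powersetCard.1 hV
          have hnotmem : t+1 ∉ V := fun hc => (Finset.mem_erase.1 (hsub hc)).1 rfl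
          rw [Finset.mem_coe, Finset.mem_filter, Finset.mem_powersetCard]
          refine ⟨⟨Finset.insert_subset huJ (hsub.trans (Finset.erase_subset _ _)), ?_⟩,
            Finset.mem_insert_self _ _⟩
          rw [Finset.card_insert_of_notMem hnotmem, hcard]
        · intro U hU
          rw [Finset.mem_coe, Finset.mem_filter] at hU
          exact Finset.insert_erase hU.2
        · intro V hV
          obtain ⟨hsub, _⟩ := Finset.mem_powersetCard.1 hV
          have hnotmem : t+1 ∉ V := fun hc => (Finset.mem_erase.1 (hsub hc)).1 rfl
          exact Finset.erase_insert hnotmem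
      rw [hc₁def, hbij, Finset.card_powersetCard, Finset.card_erase_of_mem huJ]
    have hkeyN : c₂ * (s'+1) = c₁ * (nJ - (s'+1)) := by
      rw [hc₁eq, hc₂eq, Nat.choose_succ_right_eq]
      congr 1
      omega
    have hccsum : c₁ + c₂ = (J.powersetCard (s'+1)).card :=
      Finset.card_filter_add_card_filter_not (fun U₁ => t+1 ∈ U₁)
    rw [← Finset.sum_filter_add_sum_filter_not (J.powersetCard (s'+1)) (fun U₁ => t+1 ∈ U₁)
         (fun U₁ => mart N (U₁ ∪ (U₂ ∪ W)) t)]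
    rw [Finset.sum_congr rfl hvalmem, Finset.sum_congr rfl hvalnot,
        Finset.sum_congr rfl hval1]
    rw [Finset.sum_const, Finset.sum_const, Finset.sum_const, ← hccsum]
    simp only [nsmul_eq_mul]
    rw [← hc₁def, ← hc₂def]
    have hs1 : ((s'+1) - 1 : ℕ) = s' := by omega
    rw [hs1]
    set a := nJ - (s'+1) with hadef
    by_cases hc₂0 : c₂ = 0
    · rw [hc₂0]
      push_cast
      simp only [zero_mul, add_zero]
      have h1a : (0:ℝ) < 1 + (a:ℝ) := by positivity
      apply mul_le_mul_of_nonneg_left _ (Nat.cast_nonneg c₁)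
      exact (div_le_div_iff_of_pos_right h1a).2 (by linarith)
    · have ha1 : 1 ≤ a := by
        rcases Nat.eq_zero_or_pos a with ha0 | h
        · rw [ha0, Nat.mul_zero] at hkeyN
          rcases Nat.mul_eq_zero.1 hkeyN with h | h
          · exact absurd h hc₂0
          · omega
        · exact h
      have hcast : ((a - 1 : ℕ):ℝ) = (a:ℝ) - 1 := by
        rw [Nat.cast_sub ha1, Nat.cast_one]
      have hkeyR : (c₂:ℝ) * ((s':ℝ)+1) = (c₁:ℝ) * (a:ℝ) := by exact_mod_cast hkeyN
      rw [hcast]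
      push_cast
      exact final_arith (Nat.cast_nonneg _) (Nat.cast_nonneg _) (Nat.cast_nonneg _)
        (by exact_mod_cast ha1) hkeyR

lemma mart_congr_succ {N S : Finset ℕ} {t : ℕ} (h : t+1 ∉ N) : mart N S t = mart N S (t+1) := by
  unfold mart cntB cntA
  have h1 : N.filter (fun j => j ≤ t ∧ j ∈ S) = N.filter (fun j => j ≤ t+1 ∧ j ∈ S) := by
    apply Finset.filter_congr
    intro j hj
    have hne : j ≠ t+1 := fun e => h (e ▸ hj)
    exact ⟨fun ⟨a, b⟩ => ⟨by omega, b⟩, fun ⟨a, b⟩ => ⟨by omega, b⟩⟩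
  have h2 : N.filter (fun j => j ≤ t ∧ j ∉ S) = N.filter (fun j => j ≤ t+1 ∧ j ∉ S) := by
    apply Finset.filter_congr
    intro j hj
    have hne : j ≠ t+1 := fun e => h (e ▸ hj)
    exact ⟨fun ⟨a, b⟩ => ⟨by omega, b⟩, fun ⟨a, b⟩ => ⟨by omega, b⟩⟩
  rw [h1, h2]

lemma Gt_succ_eq {c q : ℝ} {K N : Finset ℕ} {t : ℕ} {S : Finset ℕ} (h : t+1 ∉ N) :
    Gt c q K N t S = Gt c q K N (t+1) S := by
  unfold Gt
  rcases le_or_gt (stopOf c q K S) t with hle | hlt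
  · rw [max_eq_left hle, max_eq_left (by omega : stopOf c q K S ≤ t+1)]
    exact mart_congr_succ h
  · rw [max_eq_right (by omega : t ≤ stopOf c q K S),
      max_eq_right (by omega : t+1 ≤ stopOf c q K S)]

lemma sum_powerset_by_card (J : Finset ℕ) (g : Finset ℕ → ℝ) :
    ∑ V ∈ J.powerset, g V = ∑ s ∈ Finset.range (J.card + 1), ∑ V ∈ J.powersetCard s, g V := by
  rw [Finset.powerset_card_disjiUnion J]
  exact Finset.sum_disjiUnion _ _ _

lemma step {c q r : ℝ} (hc0 : 0 < c) (hc1 : c < 1) {K N W : Finset ℕ}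
    (hN1 : ∀ j ∈ N, 1 ≤ j) (hW : Disjoint N W) (hr0 : 0 ≤ r) (hr1 : r ≤ 1) (t : ℕ) :
    ∑ U ∈ N.powerset, wgt r N U * Gt c q K N t (U ∪ W)
      ≤ ∑ U ∈ N.powerset, wgt r N U * Gt c q K N (t+1) (U ∪ W) := by
  classical
  by_cases ht : t+1 ∈ N
  case neg =>
    apply le_of_eq
    exact Finset.sum_congr rfl (fun U _ => by rw [Gt_succ_eq ht])
  case pos =>
    set J := N.filter (fun j => j ≤ t+1) with hJdef
    have hJsub : J ⊆ N := Finset.filter_subset _ _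
    have hNJ : J ∪ (N \ J) = N := Finset.union_sdiff_of_subset hJsub
    have hdis : Disjoint J (N \ J) := Finset.disjoint_sdiff
    have hdecomp : ∀ g : Finset ℕ → ℝ, ∑ U ∈ N.powerset, g U
        = ∑ T ∈ (N \ J).powerset, ∑ V ∈ J.powerset, g (V ∪ T) := by
      intro g
      have h := sum_powerset_union hdis g
      rw [hNJ] at h
      rw [h]
      exact Finset.sum_comm
    rw [hdecomp, hdecomp]
    apply Finset.sum_le_sum
    intro T hT
    rw [Finset.mem_powerset] at hT
    have hwgt : ∀ V, V ⊆ J → wgt r N (V ∪ T) = wgt r J V * wgt r (N \ J) T := by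
      intro V hV
      have h := wgt_union (r := r) hdis hV hT
      rw [hNJ] at h
      exact h
    have hrw : ∀ (k : ℕ), ∑ V ∈ J.powerset, wgt r N (V ∪ T) * Gt c q K N k ((V ∪ T) ∪ W)
        = wgt r (N \ J) T * ∑ V ∈ J.powerset, wgt r J V * Gt c q K N k (V ∪ (T ∪ W)) := by
      intro k
      rw [Finset.mul_sum]
      apply Finset.sum_congr rfl
      intro V hV
      rw [Finset.mem_powerset] at hV
      rw [hwgt V hV, Finset.union_assoc]
      ring
    rw [hrw, hrw]
    apply mul_le_mul_of_nonneg_left _ (wgt_nonneg hr0 hr1 _ _)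
    rw [sum_powerset_by_card J, sum_powerset_by_card J]
    apply Finset.sum_le_sum
    intro s hs
    have hwconst : ∀ V ∈ J.powersetCard s, wgt r J V = r^s * (1-r)^(J.card - s) := by
      intro V hV
      obtain ⟨hsub, hcard⟩ := Finset.mem_powersetCard.1 hV
      unfold wgt
      rw [hcard, Finset.card_sdiff_of_subset hsub, hcard]
    have hpull : ∀ (k : ℕ), ∑ V ∈ J.powersetCard s, wgt r J V * Gt c q K N k (V ∪ (T ∪ W))
        = (r^s * (1-r)^(J.card - s)) * ∑ V ∈ J.powersetCard s, Gt c q K N k (V ∪ (T ∪ W)) := by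
      intro k
      rw [Finset.mul_sum]
      exact Finset.sum_congr rfl (fun V hV => by rw [hwconst V hV])
    rw [hpull, hpull]
    have h1r : (0:ℝ) ≤ 1 - r := by linarith
    apply mul_le_mul_of_nonneg_left _ (by positivity)
    by_cases hall : ∀ V ∈ J.powersetCard s, stopOf c q K (V ∪ (T ∪ W)) ≤ t
    · have hL : ∀ V ∈ J.powersetCard s,
          Gt c q K N t (V ∪ (T ∪ W)) = mart N (V ∪ (T ∪ W)) t := by
        intro V hV
        unfold Gt
        rw [max_eq_left (hall V hV)]
      have hR : ∀ V ∈ J.powersetCard s,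
          Gt c q K N (t+1) (V ∪ (T ∪ W)) = mart N (V ∪ (T ∪ W)) (t+1) := by
        intro V hV
        unfold Gt
        rw [max_eq_left ((hall V hV).trans (Nat.le_succ t))]
      rw [Finset.sum_congr rfl hL, Finset.sum_congr rfl hR]
      exact class_ineq hW ht hT s
    · push_neg at hall
      obtain ⟨V₀, hV₀, hV₀gt⟩ := hall
      apply le_of_eq
      apply Finset.sum_congr rfl
      intro V hV
      have hVsub := (Finset.mem_powersetCard.1 hV).1
      have hV₀sub := (Finset.mem_powersetCard.1 hV₀).1
      have hIccsub : ∀ V' : Finset ℕ, V' ⊆ J → V' ⊆ Finset.Icc 1 (t+1) := by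
        intro V' hV' j hj
        have hjJ := Finset.mem_filter.1 (hV' hj)
        exact Finset.mem_Icc.2 ⟨hN1 j hjJ.1, hjJ.2⟩
      have hdisj : ∀ V' : Finset ℕ, V' ⊆ J → Disjoint V' (T ∪ W) := by
        intro V' hV'
        rw [Finset.disjoint_union_right]
        exact ⟨hdis.mono hV' hT, hW.mono_left (hV'.trans hJsub)⟩
      have hcards : V.card = V₀.card := by
        rw [(Finset.mem_powersetCard.1 hV).2, (Finset.mem_powersetCard.1 hV₀).2]
      have hstop : t < stopOf c q K (V ∪ (T ∪ W)) := by
        by_contra hle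
        push_neg at hle
        have := (stop_le_congr hc0 hc1 (hIccsub V hVsub) (hIccsub V₀ hV₀sub) hcards
          (hdisj V hVsub) (hdisj V₀ hV₀sub)).1 hle
        omega
      unfold Gt
      rw [max_eq_right (by omega), max_eq_right (by omega)]

lemma chain {c q r : ℝ} (hc0 : 0 < c) (hc1 : c < 1) {K N W : Finset ℕ}
    (hN1 : ∀ j ∈ N, 1 ≤ j) (hW : Disjoint N W) (hr0 : 0 ≤ r) (hr1 : r ≤ 1) (T : ℕ) :
    ∑ U ∈ N.powerset, wgt r N U * Gt c q K N 0 (U ∪ W)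
      ≤ ∑ U ∈ N.powerset, wgt r N U * Gt c q K N T (U ∪ W) := by
  induction T with
  | zero => exact le_refl _
  | succ T ih => exact ih.trans (step hc0 hc1 hN1 hW hr0 hr1 T)

lemma terminal {c q r : ℝ} {m : ℕ} {K N W : Finset ℕ} (hN : N ⊆ Finset.Icc 1 m)
    (hK : K ⊆ Finset.Icc 1 m) (hW : Disjoint N W) (hr0 : 0 ≤ r) (hrc : r ≤ c)
    (hc0 : 0 ≤ c) (hc1 : c < 1) :
    ∑ U ∈ N.powerset, wgt r N U * Gt c q K N m (U ∪ W) ≤ c / (1 - c) := by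
  classical
  have h1r : (0:ℝ) < 1 - r := by linarith
  have h1c : (0:ℝ) < 1 - c := by linarith
  set n := N.card with hndef
  have hGt : ∀ U, U ⊆ N → Gt c q K N m (U ∪ W)
      = (U.card : ℝ) / (1 + ((n - U.card : ℕ) : ℝ)) := by
    intro U hU
    unfold Gt
    rw [max_eq_left (stop_le c q hK _)]
    unfold mart cntB cntA
    have hB : N.filter (fun j => j ≤ m ∧ j ∈ U ∪ W) = U := by
      ext j
      rw [Finset.mem_filter]
      constructor
      · rintro ⟨hjN, hjm, hjS⟩
        rcases Finset.mem_union.1 hjS with h | h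
        · exact h
        · exact absurd h (Finset.disjoint_left.1 hW hjN)
      · intro hj
        exact ⟨hU hj, (Finset.mem_Icc.1 (hN (hU hj))).2, Finset.mem_union_left _ hj⟩
    have hA : N.filter (fun j => j ≤ m ∧ j ∉ U ∪ W) = N \ U := by
      ext j
      rw [Finset.mem_filter, Finset.mem_sdiff]
      constructor
      · rintro ⟨hjN, hjm, hjS⟩
        exact ⟨hjN, fun h => hjS (Finset.mem_union_left _ h)⟩
      · rintro ⟨hjN, hjU⟩
        refine ⟨hjN, (Finset.mem_Icc.1 (hN hjN)).2, ?_⟩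
        intro hjS
        rcases Finset.mem_union.1 hjS with h | h
        · exact hjU h
        · exact (Finset.disjoint_left.1 hW hjN) h
    rw [hB, hA, Finset.card_sdiff_of_subset hU]
  have hstep1 : ∑ U ∈ N.powerset, wgt r N U * Gt c q K N m (U ∪ W)
      = ∑ s ∈ Finset.range (n+1),
        (n.choose s : ℝ) * (r^s * (1-r)^(n-s) * ((s:ℝ)/(1 + ((n - s:ℕ):ℝ)))) := by
    rw [sum_powerset_by_card N]
    apply Finset.sum_congr rfl
    intro s hs
    have hv : ∀ U ∈ N.powersetCard s, wgt r N U * Gt c q K N m (U ∪ W)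
        = r^s * (1-r)^(n-s) * ((s:ℝ)/(1 + ((n - s:ℕ):ℝ))) := by
      intro U hU
      obtain ⟨hsub, hcard⟩ := Finset.mem_powersetCard.1 hU
      rw [hGt U hsub]
      unfold wgt
      rw [hcard, Finset.card_sdiff_of_subset hsub, hcard]
      try ring
    rw [Finset.sum_congr rfl hv, Finset.sum_const, Finset.card_powersetCard, nsmul_eq_mul]
  rw [hstep1, Finset.sum_range_succ']
  have hzero : ((n.choose 0 : ℝ)) * (r^0 * (1-r)^(n-0) * (((0:ℕ):ℝ)/(1 + ((n - 0:ℕ):ℝ)))) = 0 := by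
    norm_num
  rw [hzero, add_zero]
  have hterm : ∀ i ∈ Finset.range n,
      (n.choose (i+1) : ℝ) * (r^(i+1) * (1-r)^(n-(i+1)) * ((((i+1:ℕ)):ℝ)/(1 + ((n - (i+1):ℕ):ℝ))))
        = (r/(1-r)) * ((n.choose i : ℝ) * (r^i * (1-r)^(n-i))) := by
    intro i hi
    have hin : i < n := Finset.mem_range.1 hi
    have hcast1 : (1:ℝ) + ((n - (i+1):ℕ):ℝ) = ((n - i:ℕ):ℝ) := by
      have h : (n - (i+1)) + 1 = n - i := by omega
      rw [← h]
      push_cast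
      ring
    have hchoose : (n.choose (i+1) : ℝ) * ((i+1:ℕ):ℝ) = (n.choose i : ℝ) * ((n-i:ℕ):ℝ) := by
      exact_mod_cast Nat.choose_succ_right_eq n i
    have hpow : (1-r)^(n-i) = (1-r)^(n-(i+1)) * (1-r) := by
      rw [← pow_succ]
      congr 1
      omega
    have hne : ((n - i:ℕ):ℝ) ≠ 0 := by
      have h0 : 0 < n - i := by omega
      have h1 : (0:ℝ) < ((n-i:ℕ):ℝ) := by exact_mod_cast h0
      linarith
    rw [hcast1, hpow]
    have h1rne : (1:ℝ)-r ≠ 0 := ne_of_gt h1r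
    field_simp
    push_cast at hchoose ⊢
    linear_combination r^(i+1) * hchoose
  refine le_trans (le_of_eq (Finset.sum_congr rfl hterm)) ?_
  rw [← Finset.mul_sum]
  have hsum1 : ∑ i ∈ Finset.range n, (n.choose i : ℝ) * (r^i * (1-r)^(n-i)) ≤ 1 := by
    have hfull : ∑ i ∈ Finset.range (n+1), (n.choose i:ℝ) * (r^i * (1-r)^(n-i)) = 1 := by
      have h := add_pow r (1-r) n
      rw [show r + (1-r) = (1:ℝ) by ring, one_pow] at h
      calc ∑ i ∈ Finset.range (n+1), (n.choose i:ℝ) * (r^i * (1-r)^(n-i))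
          = ∑ i ∈ Finset.range (n+1), r^i * (1-r)^(n-i) * (n.choose i:ℝ) := by
            apply Finset.sum_congr rfl
            intro k _
            ring
        _ = 1 := h.symm
    calc ∑ i ∈ Finset.range n, (n.choose i : ℝ) * (r^i * (1-r)^(n-i))
        ≤ ∑ i ∈ Finset.range (n+1), (n.choose i : ℝ) * (r^i * (1-r)^(n-i)) :=
          Finset.sum_le_sum_of_subset_of_nonneg
            (Finset.range_subset_range.2 (Nat.le_succ n)) (fun i _ _ => by positivity)
      _ = 1 := hfull
  calc (r/(1-r)) * ∑ i ∈ Finset.range n, (n.choose i : ℝ) * (r^i * (1-r)^(n-i))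
      ≤ (r/(1-r)) * 1 := mul_le_mul_of_nonneg_left hsum1 (by positivity)
    _ = r/(1-r) := mul_one _
    _ ≤ c/(1-c) := div_le_div₀ hc0 hrc h1c (by linarith)

lemma core {c q r : ℝ} {m : ℕ} {K N W : Finset ℕ} (hN : N ⊆ Finset.Icc 1 m)
    (hK : K ⊆ Finset.Icc 1 m) (hW : Disjoint N W) (hr0 : 0 ≤ r) (hrc : r ≤ c)
    (hc0 : 0 < c) (hc1 : c < 1) :
    ∑ U ∈ N.powerset, wgt r N U * mart N (U ∪ W) (stopOf c q K (U ∪ W)) ≤ c / (1 - c) := by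
  have hN1 : ∀ j ∈ N, 1 ≤ j := fun j hj => (Finset.mem_Icc.1 (hN hj)).1
  have hr1 : r ≤ 1 := by linarith
  have h := (chain (q := q) hc0 hc1 hN1 hW hr0 hr1 m).trans (terminal (q := q) hN hK hW hr0 hrc hc0.le hc1)
  refine le_trans (le_of_eq ?_) h
  apply Finset.sum_congr rfl
  intro U _
  rw [Gt_zero]

open MeasureTheory ProbabilityTheory in
lemma integral_eq {Ω : Type*} [MeasurableSpace Ω] (μ : Measure Ω) [IsProbabilityMeasure μ]
    (pv : Ω → ℕ → ℝ) (hmeas : ∀ j, Measurable fun ω => pv ω j) (c : ℝ)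
    (A : Finset ℕ) (h : Finset ℕ → ℝ) :
    ∫ ω, h (A.filter fun j => pv ω j ≤ c) ∂μ
      = ∑ S ∈ A.powerset, h S * (μ {ω | ∀ j ∈ A, (pv ω j ≤ c ↔ j ∈ S)}).toReal := by
  classical
  have hEv : ∀ S : Finset ℕ, MeasurableSet {ω | ∀ j ∈ A, (pv ω j ≤ c ↔ j ∈ S)} := by
    intro S
    have he : {ω | ∀ j ∈ A, (pv ω j ≤ c ↔ j ∈ S)}
        = ⋂ j ∈ (A : Set ℕ), {ω | pv ω j ≤ c ↔ j ∈ S} := by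
      ext ω
      simp [Set.mem_iInter]
    rw [he]
    apply MeasurableSet.biInter (A : Set ℕ).to_countable
    intro j _
    by_cases hj : j ∈ S
    · simp only [hj, iff_true]
      exact (hmeas j) measurableSet_Iic
    · simp only [hj, iff_false]
      exact ((hmeas j) measurableSet_Iic).compl
  have hpt : ∀ ω, h (A.filter fun j => pv ω j ≤ c)
      = ∑ S ∈ A.powerset,
          Set.indicator {ω' | ∀ j ∈ A, (pv ω' j ≤ c ↔ j ∈ S)} (fun _ => h S) ω := by
    intro ω
    have h1 : ∀ S ∈ A.powerset, S ≠ (A.filter fun j => pv ω j ≤ c) →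
        Set.indicator {ω' | ∀ j ∈ A, (pv ω' j ≤ c ↔ j ∈ S)} (fun _ => h S) ω = 0 := by
      intro S hS hne
      apply Set.indicator_of_notMem
      intro hmem
      apply hne
      have hSA := Finset.mem_powerset.1 hS
      ext j
      rw [Finset.mem_filter]
      constructor
      · intro hjS
        exact ⟨hSA hjS, (hmem j (hSA hjS)).2 hjS⟩
      · rintro ⟨hjA, hjc⟩
        exact (hmem j hjA).1 hjc
    have h2 : (A.filter fun j => pv ω j ≤ c) ∉ A.powerset →
        Set.indicator {ω' | ∀ j ∈ A, (pv ω' j ≤ c ↔ j ∈ (A.filter fun j => pv ω j ≤ c))}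
          (fun _ => h (A.filter fun j => pv ω j ≤ c)) ω = 0 := fun hn =>
      absurd (Finset.mem_powerset.2 (Finset.filter_subset _ _)) hn
    rw [Finset.sum_eq_single (A.filter fun j => pv ω j ≤ c) h1 h2,
      Set.indicator_of_mem]
    intro j hj
    simp [Finset.mem_filter, hj]
  calc ∫ ω, h (A.filter fun j => pv ω j ≤ c) ∂μ
      = ∫ ω, ∑ S ∈ A.powerset,
          Set.indicator {ω' | ∀ j ∈ A, (pv ω' j ≤ c ↔ j ∈ S)} (fun _ => h S) ω ∂μ := by
        exact integral_congr_ae (Filter.Eventually.of_forall hpt)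
    _ = ∑ S ∈ A.powerset, ∫ ω,
          Set.indicator {ω' | ∀ j ∈ A, (pv ω' j ≤ c ↔ j ∈ S)} (fun _ => h S) ω ∂μ :=
        integral_finset_sum _ (fun S _ => (integrable_const (h S)).indicator (hEv S))
    _ = ∑ S ∈ A.powerset, h S * (μ {ω | ∀ j ∈ A, (pv ω j ≤ c ↔ j ∈ S)}).toReal := by
        apply Finset.sum_congr rfl
        intro S _
        rw [integral_indicator_const (h S) (hEv S), smul_eq_mul, mul_comm, measureReal_def]

open MeasureTheory ProbabilityTheory in
lemma sum_toReal_one {Ω : Type*} [MeasurableSpace Ω] (μ : Measure Ω) [IsProbabilityMeasure μ]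
    (pv : Ω → ℕ → ℝ) (hmeas : ∀ j, Measurable fun ω => pv ω j) (c : ℝ) (A : Finset ℕ) :
    ∑ S ∈ A.powerset, (μ {ω | ∀ j ∈ A, (pv ω j ≤ c ↔ j ∈ S)}).toReal = 1 := by
  have h := integral_eq μ pv hmeas c A (fun _ => (1:ℝ))
  rw [integral_const] at h
  simp only [probReal_univ, measure_univ, ENNReal.toReal_one, smul_eq_mul, mul_one, one_mul] at h
  exact h.symm

open MeasureTheory ProbabilityTheory in
lemma measure_factor {Ω : Type*} [MeasurableSpace Ω] (μ : Measure Ω) [IsProbabilityMeasure μ]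
    (pv : Ω → ℕ → ℝ) (hmeas : ∀ j, Measurable fun ω => pv ω j)
    (m : ℕ) (N : Finset ℕ) (hN : N ⊆ Finset.Icc 1 m)
    (ν : Measure ℝ) [IsProbabilityMeasure ν]
    (hlaw : ∀ j ∈ N, Measure.map (fun ω => pv ω j) μ = ν)
    (hnullindep : iIndepFun
      (fun (j : {j // j ∈ N}) ω => pv ω j.1) μ)
    (hblockindep : IndepFun (fun ω (j : {j // j ∈ N}) => pv ω j.1)
      (fun ω (j : {j : ℕ // j ∈ Finset.Icc 1 m ∧ j ∉ N}) => pv ω j.1) μ)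
    (c : ℝ) (U V : Finset ℕ) (hU : U ⊆ N) (hV : V ⊆ Finset.Icc 1 m \ N) :
    (μ {ω | ∀ j ∈ Finset.Icc 1 m, (pv ω j ≤ c ↔ j ∈ U ∪ V)}).toReal
      = wgt ((ν (Set.Iic c)).toReal) N U
        * (μ {ω | ∀ j ∈ Finset.Icc 1 m \ N, (pv ω j ≤ c ↔ j ∈ V)}).toReal := by
  classical
  -- split the event
  have hUiff : ∀ j ∈ N, (j ∈ U ∪ V ↔ j ∈ U) := by
    intro j hj
    constructor
    · intro hUV
      rcases Finset.mem_union.1 hUV with h' | h'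
      · exact h'
      · exact absurd hj (Finset.mem_sdiff.1 (hV h')).2
    · exact fun h' => Finset.mem_union_left _ h'
  have hViff : ∀ j ∈ Finset.Icc 1 m \ N, (j ∈ U ∪ V ↔ j ∈ V) := by
    intro j hj
    constructor
    · intro hUV
      rcases Finset.mem_union.1 hUV with h' | h'
      · exact absurd (hU h') (Finset.mem_sdiff.1 hj).2
      · exact h'
    · exact fun h' => Finset.mem_union_right _ h'
  have hsplit : {ω | ∀ j ∈ Finset.Icc 1 m, (pv ω j ≤ c ↔ j ∈ U ∪ V)}
      = {ω | ∀ j ∈ N, (pv ω j ≤ c ↔ j ∈ U)}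
        ∩ {ω | ∀ j ∈ Finset.Icc 1 m \ N, (pv ω j ≤ c ↔ j ∈ V)} := by
    ext ω
    simp only [Set.mem_setOf_eq, Set.mem_inter_iff]
    constructor
    · intro hfor
      refine ⟨fun j hj => ?_, fun j hj => ?_⟩
      · rw [hfor j (hN hj)]
        exact hUiff j hj
      · rw [hfor j (Finset.mem_sdiff.1 hj).1]
        exact hViff j hj
    · rintro ⟨hA, hB⟩ j hj
      by_cases hjN : j ∈ N
      · rw [hA j hjN]
        exact (hUiff j hjN).symm
      · have hjsd : j ∈ Finset.Icc 1 m \ N := Finset.mem_sdiff.2 ⟨hj, hjN⟩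
        rw [hB j hjsd]
        exact (hViff j hjsd).symm
  -- the null block as a preimage
  set SA : Set ({j // j ∈ N} → ℝ) := {f | ∀ j : {j // j ∈ N}, (f j ≤ c ↔ j.1 ∈ U)} with hSAdef
  have hSAeq : SA = ⋂ j : {j // j ∈ N},
      (fun f : {j // j ∈ N} → ℝ => f j) ⁻¹' (if j.1 ∈ U then Set.Iic c else (Set.Iic c)ᶜ) := by
    ext f
    simp only [hSAdef, Set.mem_setOf_eq, Set.mem_iInter, Set.mem_preimage]
    apply forall_congr'
    intro j
    by_cases hj : j.1 ∈ U <;> simp [hj]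
  have hSAmeas : MeasurableSet SA := by
    rw [hSAeq]
    apply MeasurableSet.iInter
    intro j
    apply measurable_pi_apply j
    split_ifs
    · exact measurableSet_Iic
    · exact measurableSet_Iic.compl
  set SB : Set ({j : ℕ // j ∈ Finset.Icc 1 m ∧ j ∉ N} → ℝ) :=
    {f | ∀ j : {j : ℕ // j ∈ Finset.Icc 1 m ∧ j ∉ N}, (f j ≤ c ↔ j.1 ∈ V)} with hSBdef
  have hSBeq : SB = ⋂ j : {j : ℕ // j ∈ Finset.Icc 1 m ∧ j ∉ N},
      (fun f : {j : ℕ // j ∈ Finset.Icc 1 m ∧ j ∉ N} → ℝ => f j) ⁻¹'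
        (if j.1 ∈ V then Set.Iic c else (Set.Iic c)ᶜ) := by
    ext f
    simp only [hSBdef, Set.mem_setOf_eq, Set.mem_iInter, Set.mem_preimage]
    apply forall_congr'
    intro j
    by_cases hj : j.1 ∈ V <;> simp [hj]
  have hSBmeas : MeasurableSet SB := by
    rw [hSBeq]
    apply MeasurableSet.iInter
    intro j
    apply measurable_pi_apply j
    split_ifs
    · exact measurableSet_Iic
    · exact measurableSet_Iic.compl
  have hApre : {ω | ∀ j ∈ N, (pv ω j ≤ c ↔ j ∈ U)}
      = (fun ω (j : {j // j ∈ N}) => pv ω j.1) ⁻¹' SA := by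
    ext ω
    simp only [Set.mem_setOf_eq, Set.mem_preimage, hSAdef, Subtype.forall]
  have hBpre : {ω | ∀ j ∈ Finset.Icc 1 m \ N, (pv ω j ≤ c ↔ j ∈ V)}
      = (fun ω (j : {j : ℕ // j ∈ Finset.Icc 1 m ∧ j ∉ N}) => pv ω j.1) ⁻¹' SB := by
    ext ω
    simp only [Set.mem_setOf_eq, Set.mem_preimage, hSBdef, Subtype.forall, Finset.mem_sdiff]
  have hindep := indepFun_iff_measure_inter_preimage_eq_mul.1 hblockindep SA SB hSAmeas hSBmeas
  rw [hsplit, hApre, hBpre, hindep, ENNReal.toReal_mul]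
  congr 1
  -- now compute the probability of the null block
  have hprodsets : (fun ω (j : {j // j ∈ N}) => pv ω j.1) ⁻¹' SA
      = ⋂ i ∈ (Finset.univ : Finset {j // j ∈ N}),
          (fun ω => pv ω i.1) ⁻¹' (if i.1 ∈ U then Set.Iic c else (Set.Iic c)ᶜ) := by
    ext ω
    simp only [Set.mem_preimage, hSAdef, Set.mem_setOf_eq, Set.mem_iInter, Finset.mem_univ,
      true_implies]
    apply forall_congr'
    intro j
    by_cases hj : j.1 ∈ U <;> simp [hj]
  have hprod := hnullindep.measure_inter_preimage_eq_mul (S := Finset.univ)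
    (sets := fun i => if i.1 ∈ U then Set.Iic c else (Set.Iic c)ᶜ)
    (fun i _ => by split_ifs; exacts [measurableSet_Iic, measurableSet_Iic.compl])
  rw [hprodsets, hprod]
  have hcoord : ∀ i : {j // j ∈ N},
      μ ((fun ω => pv ω i.1) ⁻¹' (if i.1 ∈ U then Set.Iic c else (Set.Iic c)ᶜ))
        = if i.1 ∈ U then ν (Set.Iic c) else 1 - ν (Set.Iic c) := by
    intro i
    have hbase : μ ((fun ω => pv ω i.1) ⁻¹' Set.Iic c) = ν (Set.Iic c) := by
      rw [← hlaw i.1 i.2, Measure.map_apply (hmeas i.1) measurableSet_Iic]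
    by_cases hj : i.1 ∈ U
    · simp only [hj, if_true]
      exact hbase
    · simp only [hj, if_false]
      rw [Set.preimage_compl,
        measure_compl ((hmeas i.1) measurableSet_Iic) (measure_ne_top μ _), measure_univ, hbase]
  rw [Finset.prod_congr rfl (fun i _ => hcoord i)]
  -- convert the product over the subtype to a product over N
  have hsub : ∏ i ∈ (Finset.univ : Finset {j // j ∈ N}),
        (if i.1 ∈ U then ν (Set.Iic c) else 1 - ν (Set.Iic c))
      = ∏ j ∈ N, (if j ∈ U then ν (Set.Iic c) else 1 - ν (Set.Iic c)) := by
    exact (Finset.prod_subtype N (fun x => Iff.rfl)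
      (fun j => if j ∈ U then ν (Set.Iic c) else 1 - ν (Set.Iic c))).symm
  rw [hsub, ENNReal.toReal_prod]
  have hle1 : ν (Set.Iic c) ≤ 1 := prob_le_one
  have htr : ∀ j ∈ N, (if j ∈ U then ν (Set.Iic c) else 1 - ν (Set.Iic c)).toReal
      = if j ∈ U then (ν (Set.Iic c)).toReal else 1 - (ν (Set.Iic c)).toReal := by
    intro j _
    by_cases hj : j ∈ U
    · simp [hj]
    · simp only [hj, if_false]
      rw [ENNReal.toReal_sub_of_le hle1 ENNReal.one_ne_top, ENNReal.toReal_one]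
  rw [Finset.prod_congr rfl htr]
  -- finally: the product equals wgt
  set r := (ν (Set.Iic c)).toReal with hrdef
  rw [← Finset.prod_sdiff hU]
  unfold wgt
  rw [Finset.prod_congr rfl (fun j hj => if_neg (Finset.mem_sdiff.1 hj).2),
    Finset.prod_congr rfl (fun j hj => if_pos hj), Finset.prod_const, Finset.prod_const,
    mul_comm]

end FSTP0Aux


/-- **Modified FDR control for FSTP0** (Theorem 3): `p_1, …, p_m` are p-values whose
null members are i.i.d., stochastically dominate the uniform distribution, and are
independent (as a collection) of the non-null p-values.  Fix `c ∈ (0,1)`,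
`q ∈ (0,1]` and `K ⊆ {1,…,m}`; rejecting `H_j` for all `j ≤ k̂₀`, with
`V = #{null j ≤ k̂₀}` and `R = k̂₀`, we have `E[ V / (R + q⁻¹/(1−c)) ] ≤ q`. -/
theorem fstp0_modified_FDR_control (m : ℕ)
    {Ω : Type*} [MeasurableSpace Ω] (μ : Measure Ω) [IsProbabilityMeasure μ]
    (pv : Ω → ℕ → ℝ) (hmeas : ∀ j, Measurable fun ω => pv ω j)
    (hrange : ∀ ω, ∀ j ∈ Finset.Icc 1 m, pv ω j ∈ Set.Icc (0 : ℝ) 1)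
    (N : Finset ℕ) (hN : N ⊆ Finset.Icc 1 m)
    (ν : Measure ℝ) [IsProbabilityMeasure ν]
    (hlaw : ∀ j ∈ N, Measure.map (fun ω => pv ω j) μ = ν)
    (hdom : ∀ u : ℝ, 0 ≤ u → u ≤ 1 → ν {x | x ≤ u} ≤ ENNReal.ofReal u)
    (hnullindep : iIndepFun
      (fun (j : {j // j ∈ N}) ω => pv ω j.1) μ)
    (hblockindep : IndepFun (fun ω (j : {j // j ∈ N}) => pv ω j.1)
      (fun ω (j : {j : ℕ // j ∈ Finset.Icc 1 m ∧ j ∉ N}) => pv ω j.1) μ)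
    (c : ℝ) (hc0 : 0 < c) (hc1 : c < 1)
    (q : ℝ) (hq0 : 0 < q) (hq1 : q ≤ 1)
    (K : Finset ℕ) (hK : K ⊆ Finset.Icc 1 m) :
    ∫ ω, ((N.filter fun j => j ≤ fstp0Stop c q K (pv ω)).card : ℝ) /
          ((fstp0Stop c q K (pv ω) : ℝ) + q⁻¹ / (1 - c)) ∂μ ≤ q := by
  classical
  set r := (ν (Set.Iic c)).toReal with hrdef
  have h1c : (0:ℝ) < 1 - c := by linarith
  have hrc : r ≤ c := by
    have hd := hdom c hc0.le hc1.le
    have hset : {x : ℝ | x ≤ c} = Set.Iic c := rfl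
    rw [hset] at hd
    have h2 := ENNReal.toReal_mono (by simp : (ENNReal.ofReal c) ≠ ⊤) hd
    rwa [ENNReal.toReal_ofReal hc0.le] at h2
  have hr0 : (0:ℝ) ≤ r := ENNReal.toReal_nonneg
  have hN1 : ∀ j ∈ N, 1 ≤ j := fun j hj => (Finset.mem_Icc.1 (hN hj)).1
  set h₁ : Finset ℕ → ℝ := fun S =>
    ((N.filter fun j => j ≤ FSTP0Aux.stopOf c q K S).card : ℝ) /
      ((FSTP0Aux.stopOf c q K S : ℝ) + q⁻¹ / (1 - c)) with hh₁def
  have hrw : ∀ ω, ((N.filter fun j => j ≤ fstp0Stop c q K (pv ω)).card : ℝ) /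
        ((fstp0Stop c q K (pv ω) : ℝ) + q⁻¹ / (1 - c))
      = h₁ ((Finset.Icc 1 m).filter fun j => pv ω j ≤ c) := by
    intro ω
    rw [hh₁def]
    simp only
    rw [← FSTP0Aux.stop_eq hc0 hc1 hK (pv ω)]
  have hcrux : ∑ S ∈ (Finset.Icc 1 m).powerset, FSTP0Aux.Gt c q K N 0 S *
      (μ {ω | ∀ j ∈ Finset.Icc 1 m, (pv ω j ≤ c ↔ j ∈ S)}).toReal ≤ c / (1 - c) := by
    have hIcc : N ∪ (Finset.Icc 1 m \ N) = Finset.Icc 1 m := Finset.union_sdiff_of_subset hN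
    have hdisN : Disjoint N (Finset.Icc 1 m \ N) := Finset.disjoint_sdiff
    have hdecomp := FSTP0Aux.sum_powerset_union hdisN
      (fun S => FSTP0Aux.Gt c q K N 0 S
        * (μ {ω | ∀ j ∈ Finset.Icc 1 m, (pv ω j ≤ c ↔ j ∈ S)}).toReal)
    rw [hIcc] at hdecomp
    rw [hdecomp, Finset.sum_comm]
    have hbound : ∀ V ∈ (Finset.Icc 1 m \ N).powerset,
        ∑ U ∈ N.powerset, FSTP0Aux.Gt c q K N 0 (U ∪ V)
            * (μ {ω | ∀ j ∈ Finset.Icc 1 m, (pv ω j ≤ c ↔ j ∈ U ∪ V)}).toReal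
          ≤ (c / (1-c)) * (μ {ω | ∀ j ∈ Finset.Icc 1 m \ N, (pv ω j ≤ c ↔ j ∈ V)}).toReal := by
      intro V hVp
      have hVsub := Finset.mem_powerset.1 hVp
      have hfac : ∀ U ∈ N.powerset,
          (μ {ω | ∀ j ∈ Finset.Icc 1 m, (pv ω j ≤ c ↔ j ∈ U ∪ V)}).toReal
            = FSTP0Aux.wgt r N U
              * (μ {ω | ∀ j ∈ Finset.Icc 1 m \ N, (pv ω j ≤ c ↔ j ∈ V)}).toReal :=
        fun U hUp => FSTP0Aux.measure_factor μ pv hmeas m N hN ν hlaw hnullindep hblockindep c U V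
          (Finset.mem_powerset.1 hUp) hVsub
      calc ∑ U ∈ N.powerset, FSTP0Aux.Gt c q K N 0 (U ∪ V)
            * (μ {ω | ∀ j ∈ Finset.Icc 1 m, (pv ω j ≤ c ↔ j ∈ U ∪ V)}).toReal
          = (∑ U ∈ N.powerset, FSTP0Aux.wgt r N U * FSTP0Aux.Gt c q K N 0 (U ∪ V))
              * (μ {ω | ∀ j ∈ Finset.Icc 1 m \ N, (pv ω j ≤ c ↔ j ∈ V)}).toReal := by
            rw [Finset.sum_mul]
            apply Finset.sum_congr rfl
            intro U hUp
            rw [hfac U hUp]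
            ring
        _ ≤ (c/(1-c)) * (μ {ω | ∀ j ∈ Finset.Icc 1 m \ N, (pv ω j ≤ c ↔ j ∈ V)}).toReal := by
            apply mul_le_mul_of_nonneg_right _ ENNReal.toReal_nonneg
            have hcore := FSTP0Aux.core (q := q) (W := V) hN hK (hdisN.mono_right hVsub)
              hr0 hrc hc0 hc1
            refine le_trans (le_of_eq ?_) hcore
            apply Finset.sum_congr rfl
            intro U _
            rw [FSTP0Aux.Gt_zero]
    calc ∑ V ∈ (Finset.Icc 1 m \ N).powerset, ∑ U ∈ N.powerset,
          FSTP0Aux.Gt c q K N 0 (U ∪ V)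
            * (μ {ω | ∀ j ∈ Finset.Icc 1 m, (pv ω j ≤ c ↔ j ∈ U ∪ V)}).toReal
        ≤ ∑ V ∈ (Finset.Icc 1 m \ N).powerset, (c / (1-c))
            * (μ {ω | ∀ j ∈ Finset.Icc 1 m \ N, (pv ω j ≤ c ↔ j ∈ V)}).toReal :=
          Finset.sum_le_sum hbound
      _ = (c/(1-c)) * ∑ V ∈ (Finset.Icc 1 m \ N).powerset,
            (μ {ω | ∀ j ∈ Finset.Icc 1 m \ N, (pv ω j ≤ c ↔ j ∈ V)}).toReal := by
          rw [← Finset.mul_sum]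
      _ = (c/(1-c)) * 1 := by
          rw [FSTP0Aux.sum_toReal_one μ pv hmeas c (Finset.Icc 1 m \ N)]
      _ = c/(1-c) := mul_one _
  have hsum1 := FSTP0Aux.sum_toReal_one μ pv hmeas c (Finset.Icc 1 m)
  calc ∫ ω, ((N.filter fun j => j ≤ fstp0Stop c q K (pv ω)).card : ℝ) /
          ((fstp0Stop c q K (pv ω) : ℝ) + q⁻¹ / (1 - c)) ∂μ
      = ∫ ω, h₁ ((Finset.Icc 1 m).filter fun j => pv ω j ≤ c) ∂μ :=
        integral_congr_ae (Filter.Eventually.of_forall hrw)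
    _ = ∑ S ∈ (Finset.Icc 1 m).powerset, h₁ S
          * (μ {ω | ∀ j ∈ Finset.Icc 1 m, (pv ω j ≤ c ↔ j ∈ S)}).toReal :=
        FSTP0Aux.integral_eq μ pv hmeas c (Finset.Icc 1 m) h₁
    _ ≤ ∑ S ∈ (Finset.Icc 1 m).powerset, ((1-c)*q*(1 + FSTP0Aux.Gt c q K N 0 S))
          * (μ {ω | ∀ j ∈ Finset.Icc 1 m, (pv ω j ≤ c ↔ j ∈ S)}).toReal := by
        apply Finset.sum_le_sum
        intro S _
        exact mul_le_mul_of_nonneg_right (FSTP0Aux.pointwise hc0 hc1 hq0 hN1 S)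
          ENNReal.toReal_nonneg
    _ = (1-c)*q * ((∑ S ∈ (Finset.Icc 1 m).powerset,
            (μ {ω | ∀ j ∈ Finset.Icc 1 m, (pv ω j ≤ c ↔ j ∈ S)}).toReal)
          + ∑ S ∈ (Finset.Icc 1 m).powerset, FSTP0Aux.Gt c q K N 0 S
              * (μ {ω | ∀ j ∈ Finset.Icc 1 m, (pv ω j ≤ c ↔ j ∈ S)}).toReal) := by
        rw [mul_add, Finset.mul_sum, Finset.mul_sum, ← Finset.sum_add_distrib]
        apply Finset.sum_congr rfl
        intro S _
        ring
    _ ≤ (1-c)*q * (1 + c/(1-c)) := by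
        apply mul_le_mul_of_nonneg_left _ (by positivity)
        rw [hsum1]
        exact add_le_add_right hcrux 1
    _ = q := by
        field_simp
        ring
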